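/- Operadic compatibility of the tree invariant (Theorem on the morphism of operads): let L be a tree tangle with n strings, L' a tree tangle with m strings, and 1 ≤ i ≤ n. Let L ∘_i L' be the satellite tree tangle with n+m−1 strings obtained by removing a tubular neighborhood of the i-th string of L and gluing in a cylinder containing L', identifying the boundary using the zero framing of the i-th string, with strings reordered appropriately. Then Z(L ∘_i L') = Z(L) ∘_i Z(L') in Dias(n+m−1), where ∘_i : Dias(n) × Dias(m) → Dias(n+m−1) is the bilinear partial composition induced by grafting (substituting a tree for the i-th leaf); equivalently, on the basis described below, e_k^n ∘_i e_l^m = e_{k+m−1}^{n+m−1} if i < k, e_k^n ∘_i e_l^m = e_k^{n+m−1} if i > k, and e_k^n ∘_i e_l^m = e_{k−1+l}^{n+m−1} if i = k. In other words, the map Z from the operad of tree tangles to the diassociative operad Dias is a morphism of operads. -/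

import Mathlib

/-!
Combinatorial Gauss diagrams on `n` strings and the tree invariants `Z I j`.

A Gauss diagram is encoded by a finite set of arrows; each arrow records the
string (an element of `Fin n`) and the position (a rational number, increasing
in the direction of the orientation of the string) of its tail and of its head,
together with a sign `±1`.  Only the induced combinatorial data (linear order of
the endpoints along each string, the tail/head pairing and the signs) is ever
used by the definitions below.

The tree invariant `Z I j G = ∑_{A ∈ 𝒜_{I,j}} sign(A) ⟨A, G⟩` is computed as a
signed count over all subsets `S` of the arrows of `G` that form a planar tree
diagram with leaves on `I` and trunk on `j`: each pair `(A, φ)` of a planar tree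
diagram `A ∈ 𝒜_{I,j}` together with an embedding `φ : A → G` corresponds
bijectively to the subset `S = Im φ` of the arrows of `G`, which is itself a
planar tree diagram with leaves on `I` and trunk on `j`; the contribution of the
pair to the sum is `sign(A) · sign(φ) = (-1)^{#right-pointing arrows of S} · ∏_{a ∈ S} sign(a)`.
-/

open scoped Classical

/-- An arrow of a Gauss diagram on `n` strings: a tail endpoint, a head
endpoint (each given by the string it lies on and its position along that
string) and a sign. -/
structure GArrow (n : ℕ) where
  tailStr : Fin n
  tailPos : ℚ
  headStr : Fin n
  headPos : ℚ
  sign : ℤ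
deriving DecidableEq

namespace GArrow

/-- The two endpoints of an arrow: `false` is the tail, `true` is the head. -/
def ep {n : ℕ} (a : GArrow n) : Bool → Fin n × ℚ
  | false => (a.tailStr, a.tailPos)
  | true => (a.headStr, a.headPos)

end GArrow

/-- A Gauss diagram on `n` strings: a finite set of signed arrows with all
endpoints pairwise distinct, and all signs equal to `±1`. -/
structure GaussDiagram (n : ℕ) where
  arrows : Finset (GArrow n)
  sign_pm : ∀ a ∈ arrows, a.sign = 1 ∨ a.sign = -1
  endpoints_distinct : ∀ a ∈ arrows, ∀ b ∈ arrows, ∀ s t : Bool,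
    a.ep s = b.ep t → a = b ∧ s = t

/-- `S` is a tree diagram with leaves on `I` and trunk on `j`:
* the head and the tail of every arrow lie on different strings;
* for each `i ∈ I` there is exactly one arrow tail on string `i`, and there are
  no arrow tails on strings outside `I`;
* every arrow head lies on a string of `I ∪ {j}`;
* on each string `i ∈ I` all arrow heads precede the unique arrow tail. -/
def IsTreeDiagram {n : ℕ} (I : Finset (Fin n)) (j : Fin n)
    (S : Finset (GArrow n)) : Prop :=
  (∀ a ∈ S, a.tailStr ≠ a.headStr) ∧
  (∀ i ∈ I, ∃! a, a ∈ S ∧ a.tailStr = i) ∧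
  (∀ a ∈ S, a.tailStr ∈ I) ∧
  (∀ a ∈ S, a.headStr ∈ I ∨ a.headStr = j) ∧
  (∀ a ∈ S, ∀ b ∈ S, a.headStr = b.tailStr → a.headPos < b.tailPos)

/-- `ParentRel S s t` : string `s` is the parent of string `t` in the rooted
tree determined by the tree diagram `S`, i.e. the (unique) arrow with tail on
`t` has its head on `s`. -/
def ParentRel {n : ℕ} (S : Finset (GArrow n)) (s t : Fin n) : Prop :=
  ∃ a ∈ S, a.tailStr = t ∧ a.headStr = s

/-- `Descends S s k` : string `k` belongs to the subtree of string `s` (it is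
`s` itself or an iterated child of `s`). -/
def Descends {n : ℕ} (S : Finset (GArrow n)) : Fin n → Fin n → Prop :=
  Relation.ReflTransGen (ParentRel S)

/-- `S` is a *planar* tree diagram with leaves on `I` and trunk on `j`: the
rooted tree `T_S` determined by `S` can be drawn in the plane so that the
clockwise order of its leaves, starting from the root on string `j`, is the
order of the string numbers.  Combinatorially this says that:
* the parent relation makes the strings carrying the arrows into a tree rooted
  at `j` (every leaf string is an iterated child of `j`);
* the whole subtree hanging from an arrow lies on the same side of the string
  carrying the head of that arrow as its tail does;
* two subtrees hanging on the same side of a common string are ordered, along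
  that string, compatibly with the order of the strings: for two arrow heads on
  the same string, with both tails on the left, the subtree attached closer to
  the beginning of the string is the one carrying the larger string numbers,
  while for two tails on the right it is the one carrying the smaller string
  numbers. -/
def IsPlanarTreeDiagram {n : ℕ} (I : Finset (Fin n)) (j : Fin n)
    (S : Finset (GArrow n)) : Prop :=
  IsTreeDiagram I j S ∧
  (∀ i ∈ I, Relation.TransGen (ParentRel S) j i) ∧
  (∀ a ∈ S, ∀ k : Fin n, Descends S a.tailStr k →
    (a.tailStr < a.headStr ↔ k < a.headStr)) ∧
  (∀ a ∈ S, ∀ b ∈ S, a.headStr = b.headStr → a.headPos < b.headPos →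
    ∀ k k' : Fin n, Descends S a.tailStr k → Descends S b.tailStr k' →
      ((a.tailStr < a.headStr → b.tailStr < b.headStr → k' < k) ∧
       (a.headStr < a.tailStr → b.headStr < b.tailStr → k < k')))

/-- The sign `(-1)^q` of an (embedded) arrow diagram, where `q` is the number
of right-pointing arrows (tail on a string of smaller number than the head). -/
noncomputable def treeSign {n : ℕ} (S : Finset (GArrow n)) : ℤ :=
  (-1) ^ (S.filter fun a => a.tailStr < a.headStr).card

/-- The tree invariant `Z_{I,j}(G) = ∑_{A ∈ 𝒜_{I,j}} sign(A)·⟨A,G⟩`, computed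
as the signed count of embedded planar tree diagrams with leaves on `I` and
trunk on `j` inside `G`.  In particular `Z ∅ j G = 1` (only `S = ∅`
contributes). -/
noncomputable def Z {n : ℕ} (I : Finset (Fin n)) (j : Fin n)
    (G : GaussDiagram n) : ℤ :=
  ∑ S ∈ G.arrows.powerset,
    if IsPlanarTreeDiagram I j S then treeSign S * ∏ a ∈ S, a.sign else 0

/-- A strictly increasing squashing map `ℚ → (-1, 1)`, used to re-scale the
positions of endpoints when forming satellites. -/
def squash (q : ℚ) : ℚ := q / (1 + |q|)

/-- Renumbering of the strings of the outer diagram when the `i`-th string of a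
Gauss diagram on `n` strings is replaced by an `m`-string cable whose string
`j'` (the trunk of the inner tree tangle) traverses the whole tube: strings
below `i` keep their number, string `i` goes to the trunk copy `i + j'`, and
strings above `i` are shifted up by `m - 1`. -/
def satStr {n m : ℕ} (i : Fin n) (j' : Fin m) (s : Fin n) : Fin (n + m - 1) :=
  if _h1 : s.val < i.val then
    ⟨s.val, by have := s.isLt; have := i.isLt; have := j'.isLt; omega⟩
  else if _h2 : s.val = i.val then
    ⟨i.val + j'.val, by have := i.isLt; have := j'.isLt; omega⟩
  else
    ⟨s.val + m - 1, by have := s.isLt; have := j'.isLt; omega⟩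

/-- The effect of the satellite operation on an arrow of the outer diagram:
strings are renumbered by `satStr` (endpoints on string `i` land on the trunk
copy), positions are squashed into `(-1, 1)` and the sign is kept. -/
def satArrowG {n m : ℕ} (i : Fin n) (j' : Fin m) (a : GArrow n) :
    GArrow (n + m - 1) :=
  ⟨satStr i j' a.tailStr, squash a.tailPos,
   satStr i j' a.headStr, squash a.headPos, a.sign⟩

/-- The numbering of the cable strings: string `t` of the inner diagram becomes
string `i + t` of the satellite. -/
def satStrCable {n m : ℕ} (i : Fin n) (t : Fin m) : Fin (n + m - 1) :=
  ⟨i.val + t.val, by have := i.isLt; have := t.isLt; omega⟩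

/-- The effect of the satellite operation on an arrow of the inner diagram: the
whole inner diagram is compressed into the initial portion of the tube, so its
endpoint positions (squashed into `(-3, -1)`) precede all endpoints coming from
the outer diagram; the sign is kept.  (With the zero framing no further
crossings appear, since only one string of the inner tangle ends on the bottom
of its cylinder: all other strings can be isotoped off the tube.) -/
def satArrowCable {n m : ℕ} (i : Fin n) (a : GArrow m) : GArrow (n + m - 1) :=
  ⟨satStrCable i a.tailStr, squash a.tailPos - 2,
   satStrCable i a.headStr, squash a.headPos - 2, a.sign⟩

/-- The index map defining the partial composition of Loday's diassociative
operad on the basis `e₁,…,e_n` of `Dias(n)` (here `0`-indexed: `e_k` for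
`k : Fin n` records the position of the trunk leaf of a planar tree):
`e_k ∘ᵢ e_l = e_{k+m-1}` if `i < k`, `e_k ∘ᵢ e_l = e_k` if `i > k`, and
`e_k ∘ᵢ e_l = e_{k+l}` if `i = k`. -/
def diasIdx {n m : ℕ} (i k : Fin n) (l : Fin m) : Fin (n + m - 1) :=
  if i.val < k.val then
    ⟨k.val + m - 1, by have := k.isLt; have := l.isLt; omega⟩
  else if k.val < i.val then
    ⟨k.val, by have := k.isLt; have := l.isLt; omega⟩
  else
    ⟨k.val + l.val, by have := k.isLt; have := l.isLt; omega⟩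

/-- The bilinear partial composition
`∘ᵢ : Dias(n) × Dias(m) → Dias(n+m-1)` of the diassociative operad, with
`Dias(r)` realised as the free ℤ-module `Fin r → ℤ` on the basis `e₁,…,e_r`. -/
def diasComp {n m : ℕ} (x : Fin n → ℤ) (i : Fin n) (y : Fin m → ℤ) :
    Fin (n + m - 1) → ℤ :=
  fun t => ∑ k : Fin n, ∑ l : Fin m, if diasIdx i k l = t then x k * y l else 0

/-- The `Dias(n)`-valued tree invariant of a tree tangle given by a Gauss
diagram `G` on `n` strings with trunk on string `j`: the class in `Dias(n)` of
`Z(L) = ∑_I Z_{I,j}(G)·[T_I]`, whose only contribution in arity `n` comes from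
the trees with leaves on all `n` strings, i.e. `Z_{I,j}(G)·e_j` for
`I = {1,…,n} ∖ {j}` (the class `[T_I]` of such a tree depends only on the
position `j` of its trunk leaf). -/
noncomputable def ZDias {n : ℕ} (G : GaussDiagram n) (j : Fin n) :
    Fin n → ℤ :=
  fun k => if k = j then Z (Finset.univ.erase j) j G else 0

/-! ### Auxiliary lemmas -/

section Aux

lemma squash_strictMono : StrictMono squash := by
  intro q r h
  unfold squash
  rw [div_lt_div_iff₀ (by positivity) (by positivity)]
  rcases abs_cases q with ⟨hq, hq'⟩ | ⟨hq, hq'⟩ <;>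
    rcases abs_cases r with ⟨hr, hr'⟩ | ⟨hr, hr'⟩ <;> nlinarith

lemma squash_lt_iff {q r : ℚ} : squash q < squash r ↔ q < r :=
  squash_strictMono.lt_iff_lt

lemma squash_inj {q r : ℚ} (h : squash q = squash r) : q = r :=
  squash_strictMono.injective h

lemma neg_one_lt_squash (q : ℚ) : -1 < squash q := by
  unfold squash
  rw [lt_div_iff₀ (by positivity)]
  rcases abs_cases q with ⟨hq, hq'⟩ | ⟨hq, hq'⟩ <;> nlinarith

lemma squash_lt_one (q : ℚ) : squash q < 1 := by
  unfold squash
  rw [div_lt_iff₀ (by positivity)]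
  rcases abs_cases q with ⟨hq, hq'⟩ | ⟨hq, hq'⟩ <;> nlinarith

variable {n m : ℕ} {i : Fin n} {j' : Fin m}

lemma satStr_val (s : Fin n) :
    (satStr i j' s).val =
      if s.val < i.val then s.val
      else if s.val = i.val then i.val + j'.val
      else s.val + m - 1 := by
  unfold satStr
  split_ifs <;> rfl

lemma satStrCable_val (t : Fin m) : (satStrCable i t).val = i.val + t.val := rfl

lemma satStr_inj {s t : Fin n} (h : satStr i j' s = satStr i j' t) : s = t := by
  have hs := s.isLt; have ht := t.isLt; have hi := i.isLt; have hj := j'.isLt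
  have h' := congrArg Fin.val h
  rw [satStr_val, satStr_val] at h'
  apply Fin.ext
  split_ifs at h' <;> omega

lemma satStr_lt_iff {s t : Fin n} : satStr i j' s < satStr i j' t ↔ s < t := by
  have hs := s.isLt; have ht := t.isLt; have hi := i.isLt; have hj := j'.isLt
  rw [Fin.lt_def, Fin.lt_def, satStr_val, satStr_val]
  split_ifs <;> omega

lemma satStrCable_inj {s t : Fin m} (h : satStrCable i s = satStrCable i t) :
    s = t := by
  have h' := congrArg Fin.val h
  rw [satStrCable_val, satStrCable_val] at h'
  apply Fin.ext; omega

lemma satStrCable_lt_iff {s t : Fin m} :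
    satStrCable i s < satStrCable i t ↔ s < t := by
  rw [Fin.lt_def, Fin.lt_def, satStrCable_val, satStrCable_val]; omega

lemma satStr_eq_cable_iff {s : Fin n} {t : Fin m} :
    satStr i j' s = satStrCable i t ↔ s = i ∧ t = j' := by
  have hs := s.isLt; have hi := i.isLt; have hj := j'.isLt; have ht := t.isLt
  rw [Fin.ext_iff, Fin.ext_iff, Fin.ext_iff, satStr_val, satStrCable_val]
  split_ifs <;> omega

lemma satStr_i : satStr i j' i = satStrCable i j' := by
  rw [satStr_eq_cable_iff]; exact ⟨rfl, rfl⟩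

lemma satArrowG_inj {a b : GArrow n} (h : satArrowG i j' a = satArrowG i j' b) :
    a = b := by
  unfold satArrowG at h
  injection h with h1 h2 h3 h4 h5
  cases a; cases b
  simp only [GArrow.mk.injEq]
  exact ⟨satStr_inj h1, squash_inj h2, satStr_inj h3, squash_inj h4, h5⟩

lemma satArrowCable_inj {a b : GArrow m} (h : satArrowCable i a = satArrowCable i b) :
    a = b := by
  unfold satArrowCable at h
  injection h with h1 h2 h3 h4 h5
  cases a; cases b
  simp only [GArrow.mk.injEq]
  exact ⟨satStrCable_inj h1, squash_inj (by linarith), satStrCable_inj h3,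
    squash_inj (by linarith), h5⟩

lemma satArrowG_ne_cable (a : GArrow n) (b : GArrow m) :
    satArrowG i j' a ≠ satArrowCable i b := by
  intro h
  unfold satArrowG satArrowCable at h
  injection h with h1 h2 h3 h4 h5
  have := neg_one_lt_squash a.tailPos
  have := squash_lt_one b.tailPos
  linarith

end Aux
section Graph

open Relation Finset

variable {n m : ℕ} (i : Fin n) (j' : Fin m)

/-- The arrow set of the satellite diagram determined by subsets of the outer
and inner diagrams. -/
noncomputable def satSet (T₁ : Finset (GArrow n)) (T₂ : Finset (GArrow m)) :
    Finset (GArrow (n + m - 1)) :=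
  T₁.image (satArrowG i j') ∪ T₂.image (satArrowCable i)

variable {T₁ : Finset (GArrow n)} {T₂ : Finset (GArrow m)}

lemma mem_satSet {a : GArrow (n + m - 1)} :
    a ∈ satSet i j' T₁ T₂ ↔
      (∃ x ∈ T₁, satArrowG i j' x = a) ∨ (∃ y ∈ T₂, satArrowCable i y = a) := by
  simp [satSet, Finset.mem_union, Finset.mem_image]

lemma satArrowG_tailStr (x : GArrow n) :
    (satArrowG i j' x).tailStr = satStr i j' x.tailStr := rfl
lemma satArrowG_headStr (x : GArrow n) :
    (satArrowG i j' x).headStr = satStr i j' x.headStr := rfl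
lemma satArrowCable_tailStr (y : GArrow m) :
    (satArrowCable i y).tailStr = satStrCable i y.tailStr := rfl
lemma satArrowCable_headStr (y : GArrow m) :
    (satArrowCable i y).headStr = satStrCable i y.headStr := rfl

lemma parentRel_satSet {u v : Fin (n + m - 1)} :
    ParentRel (satSet i j' T₁ T₂) u v ↔
      (∃ x ∈ T₁, v = satStr i j' x.tailStr ∧ u = satStr i j' x.headStr) ∨
      (∃ y ∈ T₂, v = satStrCable i y.tailStr ∧ u = satStrCable i y.headStr) := by
  constructor
  · rintro ⟨a, ha, rfl, rfl⟩
    rcases (mem_satSet i j').mp ha with ⟨x, hx, rfl⟩ | ⟨y, hy, rfl⟩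
    · exact Or.inl ⟨x, hx, rfl, rfl⟩
    · exact Or.inr ⟨y, hy, rfl, rfl⟩
  · rintro (⟨x, hx, rfl, rfl⟩ | ⟨y, hy, rfl, rfl⟩)
    · exact ⟨satArrowG i j' x, (mem_satSet i j').mpr (Or.inl ⟨x, hx, rfl⟩), rfl, rfl⟩
    · exact ⟨satArrowCable i y, (mem_satSet i j').mpr (Or.inr ⟨y, hy, rfl⟩), rfl, rfl⟩

lemma parentRel_lift_outer {u v : Fin n} (h : ParentRel T₁ u v) :
    ParentRel (satSet i j' T₁ T₂) (satStr i j' u) (satStr i j' v) := by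
  obtain ⟨x, hx, rfl, rfl⟩ := h
  exact (parentRel_satSet i j').mpr (Or.inl ⟨x, hx, rfl, rfl⟩)

lemma parentRel_lift_cable {u v : Fin m} (h : ParentRel T₂ u v) :
    ParentRel (satSet i j' T₁ T₂) (satStrCable i u) (satStrCable i v) := by
  obtain ⟨y, hy, rfl, rfl⟩ := h
  exact (parentRel_satSet i j').mpr (Or.inr ⟨y, hy, rfl, rfl⟩)

lemma descends_lift_outer {u v : Fin n} (h : Descends T₁ u v) :
    Descends (satSet i j' T₁ T₂) (satStr i j' u) (satStr i j' v) :=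
  ReflTransGen.lift (satStr i j') (fun _ _ => parentRel_lift_outer i j') _ _ h

lemma descends_lift_cable {u v : Fin m} (h : Descends T₂ u v) :
    Descends (satSet i j' T₁ T₂) (satStrCable i u) (satStrCable i v) :=
  ReflTransGen.lift (satStrCable i) (fun _ _ => parentRel_lift_cable i j') _ _ h

lemma transGen_lift_outer {u v : Fin n} (h : TransGen (ParentRel T₁) u v) :
    TransGen (ParentRel (satSet i j' T₁ T₂)) (satStr i j' u) (satStr i j' v) :=
  TransGen.lift (satStr i j') (fun _ _ => parentRel_lift_outer i j') _ _ h

lemma transGen_lift_cable {u v : Fin m} (h : TransGen (ParentRel T₂) u v) :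
    TransGen (ParentRel (satSet i j' T₁ T₂)) (satStrCable i u) (satStrCable i v) :=
  TransGen.lift (satStrCable i) (fun _ _ => parentRel_lift_cable i j') _ _ h

variable (h2 : ∀ y ∈ T₂, y.tailStr ≠ j')

include h2 in
lemma descends_cable_char {t : Fin m} (ht : t ≠ j') {v : Fin (n + m - 1)} 
    (h : Descends (satSet i j' T₁ T₂) (satStrCable i t) v) :
    ∃ t₂, t₂ ≠ j' ∧ v = satStrCable i t₂ ∧ Descends T₂ t t₂ := by
  induction h with
  | refl => exact ⟨t, ht, rfl, ReflTransGen.refl⟩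
  | tail hab hbc ih =>
    obtain ⟨t₂, ht₂, rfl, hd⟩ := ih
    rcases (parentRel_satSet i j').mp hbc with ⟨x, hx, rfl, hb⟩ | ⟨y, hy, rfl, hb⟩
    · exact absurd (satStr_eq_cable_iff.mp hb.symm).2 ht₂
    · have : t₂ = y.headStr := satStrCable_inj hb
      exact ⟨y.tailStr, h2 y hy, rfl, hd.tail ⟨y, hy, rfl, this.symm⟩⟩

include h2 in
lemma descends_outer_char {s : Fin n} {v : Fin (n + m - 1)}
    (h : Descends (satSet i j' T₁ T₂) (satStr i j' s) v) :
    (∃ k, v = satStr i j' k ∧ Descends T₁ s k) ∨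
    (∃ t, t ≠ j' ∧ v = satStrCable i t ∧ Descends T₁ s i ∧ Descends T₂ j' t) := by
  induction h with
  | refl => exact Or.inl ⟨s, rfl, ReflTransGen.refl⟩
  | tail hab hbc ih =>
    rcases ih with ⟨k, rfl, hdk⟩ | ⟨t, ht, rfl, hdi, hdt⟩
    · rcases (parentRel_satSet i j').mp hbc with ⟨x, hx, rfl, hb⟩ | ⟨y, hy, rfl, hb⟩
      · have : k = x.headStr := satStr_inj hb
        exact Or.inl ⟨x.tailStr, rfl, hdk.tail ⟨x, hx, rfl, this.symm⟩⟩
      · obtain ⟨hki, hyj⟩ := satStr_eq_cable_iff.mp hb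
        refine Or.inr ⟨y.tailStr, h2 y hy, rfl, hki ▸ hdk, ?_⟩
        exact ReflTransGen.single ⟨y, hy, rfl, hyj⟩
    · rcases (parentRel_satSet i j').mp hbc with ⟨x, hx, rfl, hb⟩ | ⟨y, hy, rfl, hb⟩
      · exact absurd (satStr_eq_cable_iff.mp hb.symm).2 ht
      · have : t = y.headStr := satStrCable_inj hb
        exact Or.inr ⟨y.tailStr, h2 y hy, rfl, hdi, hdt.tail ⟨y, hy, rfl, this.symm⟩⟩

end Graph

section NoCycle

open Relation Finset

/-- In a tree diagram whose strings are all reachable from the trunk, the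
parent relation has no cycles. -/
lemma treeDiagram_noCycle {n : ℕ} {j : Fin n} {T : Finset (GArrow n)}
    (hT : IsTreeDiagram (Finset.univ.erase j) j T)
    (hP2 : ∀ s, s ≠ j → TransGen (ParentRel T) j s) :
    ∀ s, ¬ TransGen (ParentRel T) s s := by
  obtain ⟨-, hT2, hT3, -, -⟩ := hT
  -- step back along a unique parent
  have step : ∀ u v, TransGen (ParentRel T) v v → ParentRel T u v →
      TransGen (ParentRel T) u u := by
    intro u v hvv huv
    obtain ⟨b, hvb, hbv⟩ := TransGen.tail'_iff.mp hvv
    obtain ⟨a, ha, hat, hah⟩ := hbv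
    obtain ⟨a', ha', hat', hah'⟩ := id huv
    have hvI : v ∈ Finset.univ.erase j := hat ▸ hT3 a ha
    obtain ⟨c, -, hcu⟩ := hT2 v hvI
    have : a = a' := (hcu a ⟨ha, hat⟩).trans (hcu a' ⟨ha', hat'⟩).symm
    have hbu : b = u := by rw [← hah, this, hah']
    exact TransGen.head' huv (hbu ▸ hvb)
  intro s hs
  have hsj : s ≠ j := by
    rintro rfl
    obtain ⟨b, -, hbv⟩ := TransGen.tail'_iff.mp hs
    obtain ⟨a, ha, hat, -⟩ := hbv
    have := hT3 a ha
    rw [hat] at this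
    exact (Finset.mem_erase.mp this).1 rfl
  have key : ∀ v, ReflTransGen (ParentRel T) j v → ¬ TransGen (ParentRel T) v v := by
    intro v hv
    induction hv with
    | refl =>
      intro hjj
      obtain ⟨b, -, hbv⟩ := TransGen.tail'_iff.mp hjj
      obtain ⟨a, ha, hat, -⟩ := hbv
      have := hT3 a ha
      rw [hat] at this
      exact (Finset.mem_erase.mp this).1 rfl
    | tail hab hbc ih =>
      intro hcc
      exact ih (step _ _ hcc hbc)
  exact key s (hP2 s hsj).to_reflTransGen hs

lemma treeDiagram_noDesc {n : ℕ} {j : Fin n} {T : Finset (GArrow n)}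
    (hT : IsTreeDiagram (Finset.univ.erase j) j T)
    (hP2 : ∀ s, s ≠ j → TransGen (ParentRel T) j s)
    {p c : Fin n} (hpc : ParentRel T p c) (hcp : Descends T c p) : False :=
  treeDiagram_noCycle hT hP2 p (TransGen.head' hpc hcp)

end NoCycle
section KeyLemma

open Relation Finset

variable {n m : ℕ} {i : Fin n} {j' : Fin m} {j : Fin n}
variable {T₁ : Finset (GArrow n)} {T₂ : Finset (GArrow m)}

lemma satArrowG_tailPos (x : GArrow n) :
    (satArrowG i j' x).tailPos = squash x.tailPos := rfl
lemma satArrowG_headPos (x : GArrow n) :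
    (satArrowG i j' x).headPos = squash x.headPos := rfl
lemma satArrowCable_tailPos (y : GArrow m) :
    (satArrowCable i y).tailPos = squash y.tailPos - 2 := rfl
lemma satArrowCable_headPos (y : GArrow m) :
    (satArrowCable i y).headPos = squash y.headPos - 2 := rfl

lemma string_classify (i : Fin n) (j' : Fin m) (u : Fin (n + m - 1)) :
    (∃ s : Fin n, u = satStr i j' s) ∨
    (∃ t : Fin m, t ≠ j' ∧ u = satStrCable i t) := by
  have hu := u.isLt; have hi := i.isLt; have hj := j'.isLt
  rcases lt_or_ge u.val i.val with h | h
  · exact Or.inl ⟨⟨u.val, by omega⟩, by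
      apply Fin.ext; rw [satStr_val]; split_ifs <;> simp <;> omega⟩
  rcases lt_or_ge u.val (i.val + m) with h' | h'
  · by_cases ht : u.val = i.val + j'.val
    · exact Or.inl ⟨i, by apply Fin.ext; rw [satStr_val]; split_ifs <;> omega⟩
    · refine Or.inr ⟨⟨u.val - i.val, by omega⟩, ?_, ?_⟩
      · intro hc; have := congrArg Fin.val hc; simp at this; omega
      · apply Fin.ext; rw [satStrCable_val]; simp; omega
  · exact Or.inl ⟨⟨u.val - m + 1, by omega⟩, by
      apply Fin.ext; rw [satStr_val]
      split_ifs <;> simp only [Fin.val_mk] at * <;> omega⟩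

/-- Forward direction: if the satellite subset is a planar tree diagram, then
so are its outer and inner parts. -/
lemma key_forward
    (hP : IsPlanarTreeDiagram (Finset.univ.erase (satStr i j' j)) (satStr i j' j)
      (satSet i j' T₁ T₂)) :
    IsPlanarTreeDiagram (Finset.univ.erase j) j T₁ ∧
    IsPlanarTreeDiagram (Finset.univ.erase j') j' T₂ := by
  obtain ⟨⟨hS1, hS2, hS3, hS4, hS5⟩, hSP2, hSP3, hSP4⟩ := hP
  set J := satStr i j' j with hJ
  set S := satSet i j' T₁ T₂ with hS
  have hmem : ∀ u : Fin (n + m - 1), u ∈ Finset.univ.erase J ↔ u ≠ J := by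
    intro u; simp [Finset.mem_erase]
  -- no inner tail on the inner trunk
  have h2' : ∀ y ∈ T₂, y.tailStr ≠ j' := by
    intro y hy hyj
    have hgy : satArrowCable i y ∈ S := (mem_satSet i j').mpr (Or.inr ⟨y, hy, rfl⟩)
    by_cases hij : j = i
    · -- the inner trunk string is the trunk of the satellite
      apply (hmem _).mp (hS3 _ hgy)
      rw [satArrowCable_tailStr, hyj, hJ, hij, satStr_i]
    · -- the cable range is closed under passing to parents
      have hcJ : satStrCable i j' ≠ J := by
        rw [hJ]; intro h; exact hij (satStr_eq_cable_iff.mp h.symm).1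
      have up : ∀ u v, ParentRel S u v →
          (i.val ≤ v.val ∧ v.val < i.val + m) → i.val ≤ u.val ∧ u.val < i.val + m := by
        intro u v hpar hv
        rcases (parentRel_satSet i j').mp hpar with ⟨x, hx, hveq, hueq⟩ |
          ⟨y', hy', hveq, hueq⟩
        · -- outer arrow with tail in the cable range: its tail string is `i`
          have hxi : x.tailStr = i := by
            have := congrArg Fin.val hveq
            rw [satStr_val] at this
            have := x.tailStr.isLt
            apply Fin.ext
            split_ifs at * <;> omega
          -- then it has tail on the inner trunk string: contradiction with
          -- uniqueness (the inner arrow `y` also has its tail there)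
          exfalso
          obtain ⟨c, -, hcu⟩ := hS2 (satStrCable i j') ((hmem _).mpr hcJ)
          have e1 : satArrowG i j' x = c := hcu _ ⟨(mem_satSet i j').mpr
            (Or.inl ⟨x, hx, rfl⟩), by rw [satArrowG_tailStr, hxi, satStr_i]⟩
          have e2 : satArrowCable i y = c := hcu _ ⟨hgy, by
            rw [satArrowCable_tailStr, hyj]⟩
          exact satArrowG_ne_cable x y (e1.trans e2.symm)
        · subst hueq
          have := y'.headStr.isLt
          rw [satStrCable_val]; omega
      have noR : ∀ v, TransGen (ParentRel S) J v →
          ¬ (i.val ≤ v.val ∧ v.val < i.val + m) := by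
        intro v hv
        induction hv with
        | single h =>
          intro hr
          have := up _ _ h hr
          rw [hJ, satStr_val] at this
          have := j.isLt; have := Fin.val_ne_of_ne hij
          split_ifs at * <;> omega
        | tail hab hbc ih => exact fun hr => ih (up _ _ hbc hr)
      have := hSP2 (satStrCable i j') ((hmem _).mpr hcJ)
      refine noR _ this ⟨?_, ?_⟩ <;> rw [satStrCable_val]
      · omega
      · have := j'.isLt; omega
  -- no outer tail on the outer trunk
  have h1' : ∀ x ∈ T₁, x.tailStr ≠ j := by
    intro x hx hxj
    have hfx : satArrowG i j' x ∈ S := (mem_satSet i j').mpr (Or.inl ⟨x, hx, rfl⟩)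
    have := (hmem _).mp (hS3 _ hfx)
    rw [satArrowG_tailStr, hxj] at this
    exact this rfl
  -- unique tails for the outer part
  have hT2₁ : ∀ s ∈ Finset.univ.erase j, ∃! x, x ∈ T₁ ∧ x.tailStr = s := by
    intro s hs
    have hsj : s ≠ j := (Finset.mem_erase.mp hs).1
    have hsJ : satStr i j' s ≠ J := fun h => hsj (satStr_inj h)
    obtain ⟨a, ⟨haS, hat⟩, hau⟩ := hS2 (satStr i j' s) ((hmem _).mpr hsJ)
    rcases (mem_satSet i j').mp haS with ⟨x, hx, rfl⟩ | ⟨y, hy, rfl⟩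
    · refine ⟨x, ⟨hx, satStr_inj hat⟩, ?_⟩
      rintro x' ⟨hx', rfl⟩
      have : satArrowG i j' x' = satArrowG i j' x := hau _ ⟨(mem_satSet i j').mpr
        (Or.inl ⟨x', hx', rfl⟩), by
          rw [satArrowG_tailStr, ← satStr_inj hat]⟩
      exact satArrowG_inj this ▸ rfl
    · rw [satArrowCable_tailStr] at hat
      exact absurd (satStr_eq_cable_iff.mp hat.symm).2 (h2' y hy)
  -- unique tails for the inner part
  have hT2₂ : ∀ t ∈ Finset.univ.erase j', ∃! y, y ∈ T₂ ∧ y.tailStr = t := by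
    intro t ht
    have htj : t ≠ j' := (Finset.mem_erase.mp ht).1
    have htJ : satStrCable i t ≠ J := by
      rw [hJ]; intro h; exact htj (satStr_eq_cable_iff.mp h.symm).2
    obtain ⟨a, ⟨haS, hat⟩, hau⟩ := hS2 (satStrCable i t) ((hmem _).mpr htJ)
    rcases (mem_satSet i j').mp haS with ⟨x, hx, rfl⟩ | ⟨y, hy, rfl⟩
    · rw [satArrowG_tailStr] at hat
      exact absurd (satStr_eq_cable_iff.mp hat).2 htj
    · refine ⟨y, ⟨hy, satStrCable_inj hat⟩, ?_⟩
      rintro y' ⟨hy', rfl⟩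
      have : satArrowCable i y' = satArrowCable i y := hau _ ⟨(mem_satSet i j').mpr
        (Or.inr ⟨y', hy', rfl⟩), by
          rw [satArrowCable_tailStr, ← satStrCable_inj hat]⟩
      exact satArrowCable_inj this ▸ rfl
  -- the two tree-diagram structures
  have tree₁ : IsTreeDiagram (Finset.univ.erase j) j T₁ := by
    refine ⟨?_, hT2₁, ?_, ?_, ?_⟩
    · intro x hx h
      exact hS1 _ ((mem_satSet i j').mpr (Or.inl ⟨x, hx, rfl⟩)) (by
        rw [satArrowG_tailStr, satArrowG_headStr, h])
    · intro x hx
      exact Finset.mem_erase.mpr ⟨h1' x hx, Finset.mem_univ _⟩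
    · intro x hx
      by_cases h : x.headStr = j
      · exact Or.inr h
      · exact Or.inl (Finset.mem_erase.mpr ⟨h, Finset.mem_univ _⟩)
    · intro x hx y hy h
      have := hS5 _ ((mem_satSet i j').mpr (Or.inl ⟨x, hx, rfl⟩))
        _ ((mem_satSet i j').mpr (Or.inl ⟨y, hy, rfl⟩)) (by
          rw [satArrowG_headStr, satArrowG_tailStr, h])
      rw [satArrowG_headPos, satArrowG_tailPos] at this
      exact squash_lt_iff.mp this
  have tree₂ : IsTreeDiagram (Finset.univ.erase j') j' T₂ := by
    refine ⟨?_, hT2₂, ?_, ?_, ?_⟩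
    · intro y hy h
      exact hS1 _ ((mem_satSet i j').mpr (Or.inr ⟨y, hy, rfl⟩)) (by
        rw [satArrowCable_tailStr, satArrowCable_headStr, h])
    · intro y hy
      exact Finset.mem_erase.mpr ⟨h2' y hy, Finset.mem_univ _⟩
    · intro y hy
      by_cases h : y.headStr = j'
      · exact Or.inr h
      · exact Or.inl (Finset.mem_erase.mpr ⟨h, Finset.mem_univ _⟩)
    · intro y hy y' hy' h
      have := hS5 _ ((mem_satSet i j').mpr (Or.inr ⟨y, hy, rfl⟩))
        _ ((mem_satSet i j').mpr (Or.inr ⟨y', hy', rfl⟩)) (by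
          rw [satArrowCable_headStr, satArrowCable_tailStr, h])
      rw [satArrowCable_headPos, satArrowCable_tailPos] at this
      exact squash_lt_iff.mp (by linarith)
  -- connectivity for the outer part
  have hP2₁ : ∀ s ∈ Finset.univ.erase j, TransGen (ParentRel T₁) j s := by
    intro s hs
    have hsj : s ≠ j := (Finset.mem_erase.mp hs).1
    have hsJ : satStr i j' s ≠ J := fun h => hsj (satStr_inj h)
    obtain ⟨b, hJb, hbs⟩ := TransGen.tail'_iff.mp (hSP2 _ ((hmem _).mpr hsJ))
    obtain ⟨a, haS, hat, hah⟩ := hbs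
    rcases (mem_satSet i j').mp haS with ⟨x, hx, rfl⟩ | ⟨y, hy, rfl⟩
    · rw [satArrowG_tailStr] at hat
      rw [satArrowG_headStr] at hah
      have hxs : x.tailStr = s := satStr_inj hat
      subst hah
      rcases descends_outer_char i j' h2' hJb with ⟨k, hkeq, hdk⟩ |
        ⟨t, ht, hkeq, -, -⟩
      · have : k = x.headStr := satStr_inj hkeq.symm
        subst this
        exact TransGen.tail' hdk ⟨x, hx, hxs, rfl⟩
      · exact absurd (satStr_eq_cable_iff.mp hkeq).2 ht
    · rw [satArrowCable_tailStr] at hat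
      exact absurd (satStr_eq_cable_iff.mp hat.symm).2 (h2' y hy)
  -- connectivity for the inner part
  have hP2₂ : ∀ t ∈ Finset.univ.erase j', TransGen (ParentRel T₂) j' t := by
    intro t ht
    have htj : t ≠ j' := (Finset.mem_erase.mp ht).1
    have htJ : satStrCable i t ≠ J := by
      rw [hJ]; intro h; exact htj (satStr_eq_cable_iff.mp h.symm).2
    obtain ⟨b, hJb, hbs⟩ := TransGen.tail'_iff.mp (hSP2 _ ((hmem _).mpr htJ))
    obtain ⟨a, haS, hat, hah⟩ := hbs
    rcases (mem_satSet i j').mp haS with ⟨x, hx, rfl⟩ | ⟨y, hy, rfl⟩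
    · rw [satArrowG_tailStr] at hat
      exact absurd (satStr_eq_cable_iff.mp hat).2 htj
    · rw [satArrowCable_tailStr] at hat
      rw [satArrowCable_headStr] at hah
      have hyt : y.tailStr = t := satStrCable_inj hat
      subst hah
      rcases descends_outer_char i j' h2' hJb with ⟨k, hkeq, hdk⟩ |
        ⟨t₂, ht₂, hkeq, -, hdt⟩
      · have := (satStr_eq_cable_iff.mp hkeq.symm).2
        exact TransGen.single ⟨y, hy, hyt, this⟩
      · have : t₂ = y.headStr := satStrCable_inj hkeq.symm
        subst this
        exact TransGen.tail' hdt ⟨y, hy, hyt, rfl⟩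
  refine ⟨⟨tree₁, hP2₁, ?_, ?_⟩, ⟨tree₂, hP2₂, ?_, ?_⟩⟩
  · -- side condition for the outer part
    intro x hx k hk
    have := hSP3 _ ((mem_satSet i j').mpr (Or.inl ⟨x, hx, rfl⟩))
      (satStr i j' k) (by
        rw [satArrowG_tailStr]; exact descends_lift_outer i j' hk)
    rw [satArrowG_tailStr, satArrowG_headStr, satStr_lt_iff, satStr_lt_iff] at this
    exact this
  · -- order condition for the outer part
    intro x hx y hy hh hpos k k' hk hk'
    have := hSP4 _ ((mem_satSet i j').mpr (Or.inl ⟨x, hx, rfl⟩))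
      _ ((mem_satSet i j').mpr (Or.inl ⟨y, hy, rfl⟩))
      (by rw [satArrowG_headStr, satArrowG_headStr, hh])
      (by rw [satArrowG_headPos, satArrowG_headPos]; exact squash_lt_iff.mpr hpos)
      (satStr i j' k) (satStr i j' k')
      (by rw [satArrowG_tailStr]; exact descends_lift_outer i j' hk)
      (by rw [satArrowG_tailStr]; exact descends_lift_outer i j' hk')
    rw [satArrowG_tailStr, satArrowG_headStr, satArrowG_tailStr, satArrowG_headStr,
      satStr_lt_iff, satStr_lt_iff, satStr_lt_iff, satStr_lt_iff, satStr_lt_iff,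
      satStr_lt_iff] at this
    exact this
  · -- side condition for the inner part
    intro y hy t ht
    have := hSP3 _ ((mem_satSet i j').mpr (Or.inr ⟨y, hy, rfl⟩))
      (satStrCable i t) (by
        rw [satArrowCable_tailStr]; exact descends_lift_cable i j' ht)
    rw [satArrowCable_tailStr, satArrowCable_headStr, satStrCable_lt_iff,
      satStrCable_lt_iff] at this
    exact this
  · -- order condition for the inner part
    intro y hy y' hy' hh hpos t t' ht ht'
    have := hSP4 _ ((mem_satSet i j').mpr (Or.inr ⟨y, hy, rfl⟩))
      _ ((mem_satSet i j').mpr (Or.inr ⟨y', hy', rfl⟩))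
      (by rw [satArrowCable_headStr, satArrowCable_headStr, hh])
      (by rw [satArrowCable_headPos, satArrowCable_headPos]
          have := squash_lt_iff.mpr hpos; linarith)
      (satStrCable i t) (satStrCable i t')
      (by rw [satArrowCable_tailStr]; exact descends_lift_cable i j' ht)
      (by rw [satArrowCable_tailStr]; exact descends_lift_cable i j' ht')
    rw [satArrowCable_tailStr, satArrowCable_headStr, satArrowCable_tailStr,
      satArrowCable_headStr, satStrCable_lt_iff, satStrCable_lt_iff,
      satStrCable_lt_iff, satStrCable_lt_iff, satStrCable_lt_iff,
      satStrCable_lt_iff] at this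
    exact this

end KeyLemma
section KeyBackward

open Relation Finset

variable {n m : ℕ} {i : Fin n} {j' : Fin m} {j : Fin n}
variable {T₁ : Finset (GArrow n)} {T₂ : Finset (GArrow m)}

lemma cable_lt_satStr_of {t : Fin m} {k : Fin n} (h : i < k) :
    satStrCable i t < satStr i j' k := by
  have := t.isLt; have := Fin.lt_def.mp h
  rw [Fin.lt_def, satStrCable_val, satStr_val]
  split_ifs <;> omega

lemma satStr_lt_cable_of {t : Fin m} {k : Fin n} (h : k < i) :
    satStr i j' k < satStrCable i t := by
  have := t.isLt; have := Fin.lt_def.mp h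
  rw [Fin.lt_def, satStrCable_val, satStr_val]
  split_ifs <;> omega

lemma lt_of_cable_lt_satStr {t : Fin m} {k : Fin n} (hk : k ≠ i)
    (h : satStrCable i t < satStr i j' k) : i < k := by
  have := t.isLt; have := j'.isLt
  have hv : k.val ≠ i.val := fun hh => hk (Fin.ext hh)
  rw [Fin.lt_def, satStrCable_val, satStr_val] at h
  rw [Fin.lt_def]
  split_ifs at h <;> omega

/-- Backward direction: the satellite of two planar tree diagrams is a planar
tree diagram. -/
lemma key_backward
    (hP₁ : IsPlanarTreeDiagram (Finset.univ.erase j) j T₁)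
    (hP₂ : IsPlanarTreeDiagram (Finset.univ.erase j') j' T₂) :
    IsPlanarTreeDiagram (Finset.univ.erase (satStr i j' j)) (satStr i j' j)
      (satSet i j' T₁ T₂) := by
  obtain ⟨⟨h11, h12, h13, h14, h15⟩, hq2₁, hq3₁, hq4₁⟩ := hP₁
  obtain ⟨⟨h21, h22, h23, h24, h25⟩, hq2₂, hq3₂, hq4₂⟩ := hP₂
  have tree1 : IsTreeDiagram (Finset.univ.erase j) j T₁ := ⟨h11, h12, h13, h14, h15⟩
  have h2' : ∀ y ∈ T₂, y.tailStr ≠ j' := fun y hy =>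
    (Finset.mem_erase.mp (h23 y hy)).1
  have h1' : ∀ x ∈ T₁, x.tailStr ≠ j := fun x hx =>
    (Finset.mem_erase.mp (h13 x hx)).1
  have hq2₁' : ∀ s, s ≠ j → TransGen (ParentRel T₁) j s := fun s hs =>
    hq2₁ s (Finset.mem_erase.mpr ⟨hs, Finset.mem_univ _⟩)
  have hq2₂' : ∀ t, t ≠ j' → TransGen (ParentRel T₂) j' t := fun t ht =>
    hq2₂ t (Finset.mem_erase.mpr ⟨ht, Finset.mem_univ _⟩)
  have noDesc₁ : ∀ {p c : Fin n}, ParentRel T₁ p c → Descends T₁ c p → False :=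
    fun hpc hcp => treeDiagram_noDesc tree1 hq2₁' hpc hcp
  refine ⟨⟨?_, ?_, ?_, ?_, ?_⟩, ?_, ?_, ?_⟩
  · -- T1
    intro a ha h
    rcases (mem_satSet i j').mp ha with ⟨x, hx, rfl⟩ | ⟨y, hy, rfl⟩
    · rw [satArrowG_tailStr, satArrowG_headStr] at h
      exact h11 x hx (satStr_inj h)
    · rw [satArrowCable_tailStr, satArrowCable_headStr] at h
      exact h21 y hy (satStrCable_inj h)
  · -- T2
    intro u hu
    have hune : u ≠ satStr i j' j := (Finset.mem_erase.mp hu).1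
    rcases string_classify i j' u with ⟨s, rfl⟩ | ⟨t, ht, rfl⟩
    · have hsj : s ≠ j := fun h => hune (by rw [h])
      obtain ⟨x, ⟨hx, hxt⟩, hxu⟩ := h12 s (Finset.mem_erase.mpr ⟨hsj, Finset.mem_univ _⟩)
      refine ⟨satArrowG i j' x,
        ⟨(mem_satSet i j').mpr (Or.inl ⟨x, hx, rfl⟩),
          by rw [satArrowG_tailStr, hxt]⟩, ?_⟩
      rintro a ⟨haS, hat⟩
      rcases (mem_satSet i j').mp haS with ⟨x', hx', rfl⟩ | ⟨y, hy, rfl⟩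
      · rw [satArrowG_tailStr] at hat
        have := hxu x' ⟨hx', satStr_inj hat⟩
        rw [this]
      · rw [satArrowCable_tailStr] at hat
        exact absurd (satStr_eq_cable_iff.mp hat.symm).2 (h2' y hy)
    · obtain ⟨y, ⟨hy, hyt⟩, hyu⟩ := h22 t (Finset.mem_erase.mpr ⟨ht, Finset.mem_univ _⟩)
      refine ⟨satArrowCable i y,
        ⟨(mem_satSet i j').mpr (Or.inr ⟨y, hy, rfl⟩),
          by rw [satArrowCable_tailStr, hyt]⟩, ?_⟩
      rintro a ⟨haS, hat⟩
      rcases (mem_satSet i j').mp haS with ⟨x', hx', rfl⟩ | ⟨y', hy', rfl⟩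
      · rw [satArrowG_tailStr] at hat
        exact absurd (satStr_eq_cable_iff.mp hat).2 ht
      · rw [satArrowCable_tailStr] at hat
        have := hyu y' ⟨hy', satStrCable_inj hat⟩
        rw [this]
  · -- T3
    intro a ha
    refine Finset.mem_erase.mpr ⟨?_, Finset.mem_univ _⟩
    rcases (mem_satSet i j').mp ha with ⟨x, hx, rfl⟩ | ⟨y, hy, rfl⟩
    · rw [satArrowG_tailStr]
      exact fun h => h1' x hx (satStr_inj h)
    · rw [satArrowCable_tailStr]
      exact fun h => h2' y hy (satStr_eq_cable_iff.mp h.symm).2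
  · -- T4
    intro a ha
    by_cases h : a.headStr = satStr i j' j
    · exact Or.inr h
    · exact Or.inl (Finset.mem_erase.mpr ⟨h, Finset.mem_univ _⟩)
  · -- T5
    intro a ha b hb hh
    rcases (mem_satSet i j').mp ha with ⟨x, hx, rfl⟩ | ⟨y, hy, rfl⟩ <;>
      rcases (mem_satSet i j').mp hb with ⟨x', hx', rfl⟩ | ⟨y', hy', rfl⟩
    · rw [satArrowG_headStr, satArrowG_tailStr] at hh
      rw [satArrowG_headPos, satArrowG_tailPos]
      exact squash_lt_iff.mpr (h15 x hx x' hx' (satStr_inj hh))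
    · rw [satArrowG_headStr, satArrowCable_tailStr] at hh
      exact absurd (satStr_eq_cable_iff.mp hh).2 (h2' y' hy')
    · rw [satArrowCable_headPos, satArrowG_tailPos]
      have := neg_one_lt_squash x'.tailPos
      have := squash_lt_one y.headPos
      linarith
    · rw [satArrowCable_headStr, satArrowCable_tailStr] at hh
      rw [satArrowCable_headPos, satArrowCable_tailPos]
      have := h25 y hy y' hy' (satStrCable_inj hh)
      have := squash_lt_iff.mpr this
      linarith
  · -- P2
    intro u hu
    have hune : u ≠ satStr i j' j := (Finset.mem_erase.mp hu).1
    rcases string_classify i j' u with ⟨s, rfl⟩ | ⟨t, ht, rfl⟩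
    · have hsj : s ≠ j := fun h => hune (by rw [h])
      exact transGen_lift_outer i j' (hq2₁' s hsj)
    · have hdt := transGen_lift_cable (T₁ := T₁) i j' (hq2₂' t ht)
      have h1 : Descends (satSet i j' T₁ T₂) (satStr i j' j) (satStrCable i j') := by
        rw [← satStr_i]
        by_cases hij : j = i
        · rw [hij]
          exact Relation.ReflTransGen.refl
        · exact descends_lift_outer i j' (hq2₁' i fun h => hij h.symm).to_reflTransGen
      exact TransGen.trans_right h1 hdt
  · -- P3
    intro a ha k hk
    rcases (mem_satSet i j').mp ha with ⟨x, hx, rfl⟩ | ⟨y, hy, rfl⟩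
    · rw [satArrowG_tailStr] at hk
      rcases descends_outer_char i j' h2' hk with ⟨k₁, rfl, hdk⟩ | ⟨t, ht, rfl, hdi, hdt⟩
      · rw [satArrowG_tailStr, satArrowG_headStr, satStr_lt_iff, satStr_lt_iff]
        exact hq3₁ x hx k₁ hdk
      · have hxhi : x.headStr ≠ i := fun h =>
          noDesc₁ (p := i) (c := x.tailStr) ⟨x, hx, rfl, h⟩ hdi
        have h3 := hq3₁ x hx i hdi
        rw [satArrowG_tailStr, satArrowG_headStr, satStr_lt_iff, h3]
        constructor
        · exact fun h => cable_lt_satStr_of h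
        · exact fun h => lt_of_cable_lt_satStr hxhi h
    · rw [satArrowCable_tailStr] at hk
      obtain ⟨t₂, ht₂, rfl, hd⟩ := descends_cable_char i j' h2' (h2' y hy) hk
      rw [satArrowCable_tailStr, satArrowCable_headStr, satStrCable_lt_iff,
        satStrCable_lt_iff]
      exact hq3₂ y hy t₂ hd
  · -- P4
    intro a ha b hb hh hpos k k' hk hk'
    rcases (mem_satSet i j').mp ha with ⟨x, hx, rfl⟩ | ⟨y, hy, rfl⟩ <;>
      rcases (mem_satSet i j').mp hb with ⟨x', hx', rfl⟩ | ⟨y', hy', rfl⟩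
    · -- outer / outer
      rw [satArrowG_headStr, satArrowG_headStr] at hh
      rw [satArrowG_headPos, satArrowG_headPos] at hpos
      rw [satArrowG_tailStr] at hk hk'
      have heq := satStr_inj hh
      have hpos' := squash_lt_iff.mp hpos
      rcases descends_outer_char i j' h2' hk with ⟨k₁, rfl, hd⟩ | ⟨t, ht, rfl, hdi, hdt⟩ <;>
        rcases descends_outer_char i j' h2' hk' with ⟨k₁', rfl, hd'⟩ | ⟨t', ht', rfl, hdi', hdt'⟩
      · rw [satArrowG_tailStr, satArrowG_headStr, satArrowG_tailStr, satArrowG_headStr,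
          satStr_lt_iff, satStr_lt_iff, satStr_lt_iff, satStr_lt_iff, satStr_lt_iff,
          satStr_lt_iff]
        exact hq4₁ x hx x' hx' heq hpos' k₁ k₁' hd hd'
      · have hc := hq4₁ x hx x' hx' heq hpos' k₁ i hd hdi'
        rw [satArrowG_tailStr, satArrowG_headStr, satArrowG_tailStr, satArrowG_headStr,
          satStr_lt_iff, satStr_lt_iff, satStr_lt_iff, satStr_lt_iff]
        constructor
        · exact fun l1 l2 => cable_lt_satStr_of (hc.1 l1 l2)
        · exact fun g1 g2 => satStr_lt_cable_of (hc.2 g1 g2)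
      · have hc := hq4₁ x hx x' hx' heq hpos' i k₁' hdi hd'
        rw [satArrowG_tailStr, satArrowG_headStr, satArrowG_tailStr, satArrowG_headStr,
          satStr_lt_iff, satStr_lt_iff, satStr_lt_iff, satStr_lt_iff]
        constructor
        · exact fun l1 l2 => satStr_lt_cable_of (hc.1 l1 l2)
        · exact fun g1 g2 => cable_lt_satStr_of (hc.2 g1 g2)
      · have hc := hq4₁ x hx x' hx' heq hpos' i i hdi hdi'
        rw [satArrowG_tailStr, satArrowG_headStr, satArrowG_tailStr, satArrowG_headStr,
          satStr_lt_iff, satStr_lt_iff, satStr_lt_iff, satStr_lt_iff]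
        constructor
        · exact fun l1 l2 => absurd (hc.1 l1 l2) (lt_irrefl i)
        · exact fun g1 g2 => absurd (hc.2 g1 g2) (lt_irrefl i)
    · -- outer / cable : impossible position order
      exfalso
      rw [satArrowG_headPos, satArrowCable_headPos] at hpos
      have := neg_one_lt_squash x.headPos
      have := squash_lt_one y'.headPos
      linarith
    · -- cable / outer
      rw [satArrowCable_headStr, satArrowG_headStr] at hh
      obtain ⟨hxh, hyh⟩ := satStr_eq_cable_iff.mp hh.symm
      rw [satArrowCable_tailStr] at hk
      rw [satArrowG_tailStr] at hk'
      obtain ⟨t₂, ht₂, rfl, hd2⟩ := descends_cable_char i j' h2' (h2' y hy) hk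
      rcases descends_outer_char i j' h2' hk' with ⟨k₁, rfl, hdk₁⟩ | ⟨t', ht', rfl, hdi', hdt'⟩
      · have h3 := hq3₁ x' hx' k₁ hdk₁
        have hk₁i : k₁ ≠ i := fun h =>
          noDesc₁ (p := i) (c := x'.tailStr) ⟨x', hx', rfl, hxh⟩ (h ▸ hdk₁)
        simp only [satArrowCable_tailStr, satArrowCable_headStr, satArrowG_tailStr,
          satArrowG_headStr, satStr_lt_iff, satStrCable_lt_iff]
        constructor
        · intro l1 l2
          have : k₁ < x'.headStr := h3.mp l2
          rw [hxh] at this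
          exact satStr_lt_cable_of this
        · intro g1 g2
          have hnk : ¬ (k₁ < x'.headStr) := fun h => absurd (h3.mpr h) (asymm g2)
          rw [hxh] at hnk
          have : i < k₁ := lt_of_le_of_ne (not_lt.mp hnk) (Ne.symm hk₁i)
          exact cable_lt_satStr_of this
      · exact (noDesc₁ (p := i) (c := x'.tailStr) ⟨x', hx', rfl, hxh⟩ hdi').elim
    · -- cable / cable
      rw [satArrowCable_headStr, satArrowCable_headStr] at hh
      rw [satArrowCable_headPos, satArrowCable_headPos] at hpos
      rw [satArrowCable_tailStr] at hk hk'
      have heq := satStrCable_inj hh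
      have hpos' := squash_lt_iff.mp (by linarith : squash y.headPos < squash y'.headPos)
      obtain ⟨t₂, ht₂, rfl, hd⟩ := descends_cable_char i j' h2' (h2' y hy) hk
      obtain ⟨t₂', ht₂', rfl, hd'⟩ := descends_cable_char i j' h2' (h2' y' hy') hk'
      rw [satArrowCable_tailStr, satArrowCable_headStr, satArrowCable_tailStr,
        satArrowCable_headStr, satStrCable_lt_iff, satStrCable_lt_iff,
        satStrCable_lt_iff, satStrCable_lt_iff, satStrCable_lt_iff, satStrCable_lt_iff]
      exact hq4₂ y hy y' hy' heq hpos' t₂ t₂' hd hd'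

end KeyBackward
section Weights

open Finset

variable {n m : ℕ} {i : Fin n} {j' : Fin m}
variable {T₁ : Finset (GArrow n)} {T₂ : Finset (GArrow m)}

lemma satImages_disjoint :
    Disjoint (T₁.image (satArrowG i j')) (T₂.image (satArrowCable i)) := by
  rw [Finset.disjoint_left]
  rintro a ha hb
  obtain ⟨x, -, rfl⟩ := Finset.mem_image.mp ha
  obtain ⟨y, -, hgy⟩ := Finset.mem_image.mp hb
  exact satArrowG_ne_cable x y hgy.symm

lemma treeSign_satSet :
    treeSign (satSet i j' T₁ T₂) = treeSign T₁ * treeSign T₂ := by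
  unfold treeSign satSet
  rw [Finset.filter_union,
    Finset.card_union_of_disjoint (Finset.disjoint_filter_filter satImages_disjoint)]
  have e1 : (T₁.image (satArrowG i j')).filter (fun a => a.tailStr < a.headStr) =
      (T₁.filter fun x => x.tailStr < x.headStr).image (satArrowG i j') := by
    ext a
    simp only [Finset.mem_filter, Finset.mem_image]
    constructor
    · rintro ⟨⟨x, hx, rfl⟩, hpr⟩
      rw [satArrowG_tailStr, satArrowG_headStr, satStr_lt_iff] at hpr
      exact ⟨x, ⟨hx, hpr⟩, rfl⟩
    · rintro ⟨x, ⟨hx, hpr⟩, rfl⟩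
      refine ⟨⟨x, hx, rfl⟩, ?_⟩
      rw [satArrowG_tailStr, satArrowG_headStr, satStr_lt_iff]
      exact hpr
  have e2 : (T₂.image (satArrowCable i)).filter (fun a => a.tailStr < a.headStr) =
      (T₂.filter fun y => y.tailStr < y.headStr).image (satArrowCable i) := by
    ext a
    simp only [Finset.mem_filter, Finset.mem_image]
    constructor
    · rintro ⟨⟨y, hy, rfl⟩, hpr⟩
      rw [satArrowCable_tailStr, satArrowCable_headStr, satStrCable_lt_iff] at hpr
      exact ⟨y, ⟨hy, hpr⟩, rfl⟩
    · rintro ⟨y, ⟨hy, hpr⟩, rfl⟩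
      refine ⟨⟨y, hy, rfl⟩, ?_⟩
      rw [satArrowCable_tailStr, satArrowCable_headStr, satStrCable_lt_iff]
      exact hpr
  rw [e1, e2, Finset.card_image_of_injective _ (fun a b h => satArrowG_inj h),
    Finset.card_image_of_injective _ (fun a b h => satArrowCable_inj h), pow_add]

lemma prodSign_satSet :
    (∏ a ∈ satSet i j' T₁ T₂, a.sign) =
      (∏ a ∈ T₁, a.sign) * ∏ a ∈ T₂, a.sign := by
  unfold satSet
  rw [Finset.prod_union satImages_disjoint,
    Finset.prod_image (fun a _ b _ h => satArrowG_inj h),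
    Finset.prod_image (fun a _ b _ h => satArrowCable_inj h)]
  rfl

variable {j : Fin n}

lemma weight_satSet :
    (if IsPlanarTreeDiagram (Finset.univ.erase (satStr i j' j)) (satStr i j' j)
        (satSet i j' T₁ T₂)
      then treeSign (satSet i j' T₁ T₂) * ∏ a ∈ satSet i j' T₁ T₂, a.sign else 0) =
    (if IsPlanarTreeDiagram (Finset.univ.erase j) j T₁
      then treeSign T₁ * ∏ a ∈ T₁, a.sign else 0) *
    (if IsPlanarTreeDiagram (Finset.univ.erase j') j' T₂
      then treeSign T₂ * ∏ a ∈ T₂, a.sign else 0) := by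
  by_cases h1 : IsPlanarTreeDiagram (Finset.univ.erase j) j T₁ <;>
    by_cases h2 : IsPlanarTreeDiagram (Finset.univ.erase j') j' T₂
  · rw [if_pos (key_backward h1 h2), if_pos h1, if_pos h2, treeSign_satSet,
      prodSign_satSet]
    ring
  · rw [if_neg (fun h => h2 (key_forward h).2), if_neg h2, mul_zero]
  · rw [if_neg (fun h => h1 (key_forward h).1), if_neg h1, zero_mul]
  · rw [if_neg (fun h => h1 (key_forward h).1), if_neg h1, zero_mul]

lemma Z_satSet (G : GaussDiagram n) (G' : GaussDiagram m)
    (Gsat : GaussDiagram (n + m - 1))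
    (hsat : Gsat.arrows =
      (G.arrows.image (satArrowG i j')) ∪ (G'.arrows.image (satArrowCable i))) :
    Z (Finset.univ.erase (satStr i j' j)) (satStr i j' j) Gsat =
      Z (Finset.univ.erase j) j G * Z (Finset.univ.erase j') j' G' := by
  unfold Z
  rw [hsat]
  have right_inv : ∀ S ∈ ((G.arrows.image (satArrowG i j')) ∪
      (G'.arrows.image (satArrowCable i))).powerset,
      satSet i j' (G.arrows.filter fun x => satArrowG i j' x ∈ S)
        (G'.arrows.filter fun y => satArrowCable i y ∈ S) = S := by
    intro S hS
    have hS' := Finset.mem_powerset.mp hS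
    ext a
    rw [mem_satSet]
    constructor
    · rintro (⟨x, hx, rfl⟩ | ⟨y, hy, rfl⟩)
      · exact (Finset.mem_filter.mp hx).2
      · exact (Finset.mem_filter.mp hy).2
    · intro haS
      rcases Finset.mem_union.mp (hS' haS) with h | h
      · obtain ⟨x, hx, rfl⟩ := Finset.mem_image.mp h
        exact Or.inl ⟨x, Finset.mem_filter.mpr ⟨hx, haS⟩, rfl⟩
      · obtain ⟨y, hy, rfl⟩ := Finset.mem_image.mp h
        exact Or.inr ⟨y, Finset.mem_filter.mpr ⟨hy, haS⟩, rfl⟩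
  have step1 : ∑ S ∈ ((G.arrows.image (satArrowG i j')) ∪
        (G'.arrows.image (satArrowCable i))).powerset,
      (if IsPlanarTreeDiagram (Finset.univ.erase (satStr i j' j)) (satStr i j' j) S
        then treeSign S * ∏ a ∈ S, a.sign else 0) =
      ∑ p ∈ G.arrows.powerset ×ˢ G'.arrows.powerset,
      (if IsPlanarTreeDiagram (Finset.univ.erase (satStr i j' j)) (satStr i j' j)
          (satSet i j' p.1 p.2)
        then treeSign (satSet i j' p.1 p.2) * ∏ a ∈ satSet i j' p.1 p.2, a.sign
        else 0) := by
    refine Finset.sum_nbij'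
      (fun S => (G.arrows.filter fun x => satArrowG i j' x ∈ S,
                 G'.arrows.filter fun y => satArrowCable i y ∈ S))
      (fun p => satSet i j' p.1 p.2) ?_ ?_ ?_ ?_ ?_
    · intro S hS
      exact Finset.mem_product.mpr ⟨Finset.mem_powerset.mpr (Finset.filter_subset _ _),
        Finset.mem_powerset.mpr (Finset.filter_subset _ _)⟩
    · intro p hp
      obtain ⟨hp1, hp2⟩ := Finset.mem_product.mp hp
      refine Finset.mem_powerset.mpr ?_
      unfold satSet
      exact Finset.union_subset_union
        (Finset.image_subset_image (Finset.mem_powerset.mp hp1))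
        (Finset.image_subset_image (Finset.mem_powerset.mp hp2))
    · exact right_inv
    · intro p hp
      obtain ⟨hp1, hp2⟩ := Finset.mem_product.mp hp
      have hp1' := Finset.mem_powerset.mp hp1
      have hp2' := Finset.mem_powerset.mp hp2
      refine Prod.ext ?_ ?_
      · ext x
        simp only [Finset.mem_filter]
        constructor
        · rintro ⟨hx, hmem⟩
          rcases (mem_satSet i j').mp hmem with ⟨x', hx', he⟩ | ⟨y', hy', he⟩
          · rw [← satArrowG_inj he]; exact hx'
          · exact absurd he.symm (satArrowG_ne_cable x y')
        · intro hx
          exact ⟨hp1' hx, (mem_satSet i j').mpr (Or.inl ⟨x, hx, rfl⟩)⟩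
      · ext y
        simp only [Finset.mem_filter]
        constructor
        · rintro ⟨hy, hmem⟩
          rcases (mem_satSet i j').mp hmem with ⟨x', hx', he⟩ | ⟨y', hy', he⟩
          · exact absurd he (satArrowG_ne_cable x' y)
          · rw [← satArrowCable_inj he]; exact hy'
        · intro hy
          exact ⟨hp2' hy, (mem_satSet i j').mpr (Or.inr ⟨y, hy, rfl⟩)⟩
    · intro S hS
      rw [right_inv S hS]
  rw [step1, Finset.sum_product, Finset.sum_mul_sum]
  exact Finset.sum_congr rfl fun T₁' _ =>
    Finset.sum_congr rfl fun T₂' _ => weight_satSet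

end Weights
section Assembly

open Finset

lemma diasIdx_eq {n m : ℕ} (i j : Fin n) (j' : Fin m) :
    diasIdx i j j' = satStr i j' j := by
  have := j.isLt; have := i.isLt; have := j'.isLt
  apply Fin.ext
  rw [satStr_val]
  unfold diasIdx
  split_ifs <;> simp_all <;> omega

lemma collapse_sum {n m : ℕ} (i : Fin n) (u : Fin (n + m - 1)) (A B : ℤ)
    (k0 : Fin n) (l0 : Fin m) :
    (∑ k : Fin n, ∑ l : Fin m,
      if diasIdx i k l = u then (if k = k0 then A else 0) * (if l = l0 then B else 0)
      else 0) = if diasIdx i k0 l0 = u then A * B else 0 := by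
  rw [Finset.sum_eq_single k0]
  · rw [Finset.sum_eq_single l0]
    · simp
    · intro l _ hl
      simp [hl]
    · simp
  · intro k _ hk
    apply Finset.sum_eq_zero
    intro l _
    simp [hk]
  · simp


/-- **Operadic compatibility of the tree invariant: `Z` is a morphism from the
operad of tree tangles to the diassociative operad.**  Let `G` be a Gauss
diagram of a tree tangle `L` on `n` strings with trunk `j`, `G'` a Gauss
diagram of a tree tangle `L'` on `m` strings with trunk `j'`, and let `Gsat` be
the Gauss diagram of the satellite tree tangle `L ∘ᵢ L'` on `n + m - 1` strings
(obtained by gluing a cylinder containing `L'` into a tubular neighborhood of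
the `i`-th string of `L` using the zero framing, strings reordered
appropriately; its trunk is `satStr i j' j`).  Then
`Z(L ∘ᵢ L') = Z(L) ∘ᵢ Z(L')` in `Dias(n+m-1)`; moreover `∘ᵢ` acts on the basis
by `e_k ∘ᵢ e_l = e_{k+m-1}` if `i < k`, `e_k ∘ᵢ e_l = e_k` if `i > k`, and
`e_k ∘ᵢ e_l = e_{k-1+l}` if `i = k`. -/
theorem tree_invariant_operad_morphism {n m : ℕ}
    (G : GaussDiagram n) (j : Fin n) (G' : GaussDiagram m) (j' : Fin m)
    (i : Fin n) (Gsat : GaussDiagram (n + m - 1))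
    (hsat : Gsat.arrows =
      (G.arrows.image (satArrowG i j')) ∪ (G'.arrows.image (satArrowCable i))) :
    ZDias Gsat (satStr i j' j) = diasComp (ZDias G j) i (ZDias G' j') ∧
    (∀ (k : Fin n) (l : Fin m),
      diasComp (Pi.single k 1) i (Pi.single l 1)
        = Pi.single (diasIdx i k l) 1) := by
  constructor
  · funext u
    simp only [ZDias, diasComp]
    rw [collapse_sum i u _ _ j j', diasIdx_eq]
    by_cases h : u = satStr i j' j
    · rw [if_pos h, if_pos h.symm, Z_satSet G G' Gsat hsat]
    · rw [if_neg h, if_neg (fun hh => h hh.symm)]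
  · intro k l
    funext t
    simp only [diasComp, Pi.single_apply]
    rw [collapse_sum i t 1 1 k l, one_mul]
    simp only [eq_comm]

end Assembly
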